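/- Let f₁,…,f_m, g : ℝⁿ → ℝ be Borel measurable, S ⊆ ℝⁿ, and φ ∈ ℝᵐ with φ not in the boundary of D(S) = {ψ ∈ ℝᵐ : M(S,ψ) ≠ ∅}. Then there exists a progressive cover (S_k)_{k≥1} of S such that Γ(S_k) is bounded for every k, and moreover: if φ ∉ closure(D(S)) then φ ∉ closure(D(S_k)) for all k, and if φ ∈ interior(D(S)) then φ ∈ interior(D(S_k)) for all k. -/

import Mathlib

open MeasureTheory Set Filter Topology
open scoped BigOperators ENNReal

noncomputable section

/-- The support of a measure: points all of whose open neighborhoods have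
positive measure. -/
def msupport {E : Type*} [TopologicalSpace E] [MeasurableSpace E]
    (μ : Measure E) : Set E :=
  {x | ∀ U : Set E, IsOpen U → x ∈ U → μ U ≠ 0}

/-- `M(S,φ)`: Borel probability measures with support contained in `S`,
with `E[f i] = φ i` for all `i` and `E[g]` finite. -/
def MC (n m : ℕ) (f : (Fin n → ℝ) → Fin m → ℝ) (g : (Fin n → ℝ) → ℝ)
    (S : Set (Fin n → ℝ)) (φ : Fin m → ℝ) : Set (Measure (Fin n → ℝ)) :=
  {μ | IsProbabilityMeasure μ ∧ msupport μ ⊆ S ∧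
    (∀ i, Integrable (fun x => f x i) μ) ∧ (∀ i, ∫ x, f x i ∂μ = φ i) ∧
    Integrable g μ}

/-- A progressive cover of `S`: a monotone sequence of subsets of `S`
covering `S`. -/
def ProgCover {E : Type*} (S : Set E) (T : ℕ → Set E) : Prop :=
  (∀ i j, i ≤ j → T i ⊆ T j) ∧ (∀ i, T i ⊆ S) ∧ ∀ x ∈ S, ∃ i, x ∈ T i

/-- The feasible set `D(A)` for a subset `A ⊆ S`. -/
def DD (n m : ℕ) (f : (Fin n → ℝ) → Fin m → ℝ) (g : (Fin n → ℝ) → ℝ)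
    (A : Set (Fin n → ℝ)) : Set (Fin m → ℝ) :=
  {ψ | (MC n m f g A ψ).Nonempty}

lemma DD_mono {n m : ℕ} (f : (Fin n → ℝ) → Fin m → ℝ) (g : (Fin n → ℝ) → ℝ)
    {A B : Set (Fin n → ℝ)} (h : A ⊆ B) : DD n m f g A ⊆ DD n m f g B := by
  rintro ψ ⟨μ, h1, h2, h3, h4, h5⟩
  exact ⟨μ, h1, h2.trans h, h3, h4, h5⟩

lemma DD_convex {n m : ℕ} (f : (Fin n → ℝ) → Fin m → ℝ) (g : (Fin n → ℝ) → ℝ)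
    (A : Set (Fin n → ℝ)) : Convex ℝ (DD n m f g A) := by
  rintro ψ ⟨μ, hμp, hμs, hμi, hμe, hμg⟩ ψ' ⟨ν, hνp, hνs, hνi, hνe, hνg⟩ a b ha hb hab
  haveI := hμp; haveI := hνp
  set κ : Measure (Fin n → ℝ) := ENNReal.ofReal a • μ + ENNReal.ofReal b • ν with hκ
  have hano : ENNReal.ofReal a ≠ ⊤ := ENNReal.ofReal_ne_top
  have hbno : ENNReal.ofReal b ≠ ⊤ := ENNReal.ofReal_ne_top
  refine ⟨κ, ⟨?_⟩, ?_, ?_, ?_, ?_⟩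
  · simp only [hκ, Measure.add_apply, Measure.smul_apply, smul_eq_mul, measure_univ, mul_one]
    rw [← ENNReal.ofReal_add ha hb, hab, ENNReal.ofReal_one]
  · intro x hx
    by_contra hxA
    have hxμ : x ∉ msupport μ := fun h => hxA (hμs h)
    have hxν : x ∉ msupport ν := fun h => hxA (hνs h)
    simp only [msupport, mem_setOf_eq, not_forall] at hxμ hxν
    obtain ⟨U, hU, hxU, hU0⟩ := hxμ
    obtain ⟨V, hV, hxV, hV0⟩ := hxν
    push_neg at hU0 hV0
    refine hx (U ∩ V) (hU.inter hV) ⟨hxU, hxV⟩ ?_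
    have h1 : μ (U ∩ V) = 0 := measure_mono_null inter_subset_left hU0
    have h2 : ν (U ∩ V) = 0 := measure_mono_null inter_subset_right hV0
    simp [hκ, Measure.add_apply, Measure.smul_apply, h1, h2]
  · intro i
    exact ((hμi i).smul_measure hano).add_measure ((hνi i).smul_measure hbno)
  · intro i
    rw [hκ, integral_add_measure ((hμi i).smul_measure hano) ((hνi i).smul_measure hbno),
      integral_smul_measure, integral_smul_measure, ENNReal.toReal_ofReal ha,
      ENNReal.toReal_ofReal hb, hμe i, hνe i]
    simp [smul_eq_mul]
  · exact (hμg.smul_measure hano).add_measure (hνg.smul_measure hbno)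

/-- If a convex set comes `δ`-close to every point of the closed `ε`-ball around `φ`,
with `4δ ≤ ε`, then its closure contains the `ε/2`-ball. -/
lemma mem_closure_of_net {E : Type*} [NormedAddCommGroup E] [NormedSpace ℝ E]
    {C : Set E} (hC : Convex ℝ C) {φ : E} {ε δ : ℝ} (hδ : 0 < δ) (hε : 4 * δ ≤ ε)
    (hnet : ∀ ψ : E, dist ψ φ ≤ ε → ∃ c ∈ C, dist c ψ ≤ δ)
    {x : E} (hx : dist x φ ≤ ε / 2) : x ∈ closure C := by
  have hε0 : 0 < ε := lt_of_lt_of_le (by linarith) hε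
  -- The improvement step
  have step : ∀ c ∈ C, dist c x ≤ δ → ∃ c' ∈ C, dist c' x ≤ dist c x / 2 := by
    intro c hc hcx
    rcases eq_or_lt_of_le (dist_nonneg (x := c) (y := x)) with h0 | hs0
    · exact ⟨c, hc, by rw [← h0]; simp⟩
    obtain ⟨s, hs⟩ : ∃ s : ℝ, dist c x = s := ⟨_, rfl⟩
    rw [hs] at hcx hs0 ⊢
    have hsx : ‖x - c‖ = s := by rw [norm_sub_rev, ← dist_eq_norm, hs]
    have hne1 : ε + 2 * s ≠ 0 := by positivity
    have hne2 : s ≠ 0 := hs0.ne'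
    have hψφ : dist (x + (ε / (2 * s)) • (x - c)) φ ≤ ε := by
      have h1 : dist (x + (ε / (2 * s)) • (x - c)) x = ε / 2 := by
        rw [dist_eq_norm, add_sub_cancel_left, norm_smul, Real.norm_eq_abs,
          abs_of_pos (by positivity), hsx]
        field_simp
      calc dist (x + (ε / (2 * s)) • (x - c)) φ
          ≤ dist (x + (ε / (2 * s)) • (x - c)) x + dist x φ := dist_triangle _ _ _
        _ ≤ ε / 2 + ε / 2 := by rw [h1]; linarith
        _ = ε := by ring
    obtain ⟨d, hd, hdψ⟩ := hnet _ hψφ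
    have hθ0 : (0:ℝ) < 2 * s / (ε + 2 * s) := by positivity
    have hθ1 : 2 * s / (ε + 2 * s) ≤ 1 := by
      rw [div_le_one (by positivity)]; linarith
    refine ⟨(1 - 2 * s / (ε + 2 * s)) • c + (2 * s / (ε + 2 * s)) • d,
      hC hc hd (by linarith) hθ0.le (by ring), ?_⟩
    have hvec : (1 - 2 * s / (ε + 2 * s)) • c + (2 * s / (ε + 2 * s)) • d - x
        = (2 * s / (ε + 2 * s)) • (d - (x + (ε / (2 * s)) • (x - c))) := by
      match_scalars <;> (field_simp; try ring)
    rw [dist_eq_norm, hvec, norm_smul, Real.norm_eq_abs, abs_of_pos hθ0]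
    have hdist : ‖d - (x + (ε / (2 * s)) • (x - c))‖ ≤ δ := by
      rw [← dist_eq_norm]; exact hdψ
    calc 2 * s / (ε + 2 * s) * ‖d - (x + (ε / (2 * s)) • (x - c))‖
        ≤ 2 * s / (ε + 2 * s) * δ := mul_le_mul_of_nonneg_left hdist hθ0.le
      _ ≤ s / 2 := by
          rw [div_mul_eq_mul_div, div_le_div_iff₀ (by positivity) (by norm_num)]
          nlinarith
  -- Iterate
  have H : ∀ N : ℕ, ∃ c ∈ C, dist c x ≤ δ / 2 ^ N := by
    intro N
    induction N with
    | zero =>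
      obtain ⟨c, hc, hcx⟩ := hnet x (hx.trans (by linarith))
      exact ⟨c, hc, by simpa using hcx⟩
    | succ N ih =>
      obtain ⟨c, hc, hcx⟩ := ih
      have hle : dist c x ≤ δ := hcx.trans (by
        apply div_le_self hδ.le
        exact one_le_pow₀ (by norm_num))
      obtain ⟨c', hc', hc'x⟩ := step c hc hle
      refine ⟨c', hc', hc'x.trans ?_⟩
      rw [pow_succ]
      calc dist c x / 2 ≤ (δ / 2 ^ N) / 2 := by linarith
        _ = δ / (2 ^ N * 2) := by ring
  rw [Metric.mem_closure_iff]
  intro ρ hρ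
  obtain ⟨N, hN⟩ : ∃ N : ℕ, ((1:ℝ)/2) ^ N < ρ / δ :=
    exists_pow_lt_of_lt_one (by positivity) (by norm_num)
  obtain ⟨c, hc, hcx⟩ := H N
  refine ⟨c, hc, ?_⟩
  rw [dist_comm]
  calc dist c x ≤ δ / 2 ^ N := hcx
    _ = δ * (1/2) ^ N := by rw [div_pow, one_pow]; ring
    _ < δ * (ρ / δ) := by
        exact mul_lt_mul_of_pos_left hN hδ
    _ = ρ := by field_simp

/-- In a finite-dimensional space, a convex set whose closure contains a closed
ball around `φ` has `φ` in its interior. -/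
lemma mem_interior_of_closedBall_subset_closure {m : ℕ} {C : Set (Fin m → ℝ)}
    (hC : Convex ℝ C) {φ : Fin m → ℝ} {r : ℝ} (hr : 0 < r)
    (h : Metric.closedBall φ r ⊆ closure C) : φ ∈ interior C := by
  have hspan : affineSpan ℝ C = ⊤ := by
    have h1 : affineSpan ℝ (closure C) = ⊤ := by
      apply affineSpan_eq_top_of_nonempty_interior
      refine ⟨φ, ?_⟩
      have : Metric.ball φ r ⊆ interior (convexHull ℝ (closure C)) :=
        interior_maximal ((Metric.ball_subset_closedBall.trans h).trans
          (subset_convexHull ℝ _)) Metric.isOpen_ball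
      exact this (Metric.mem_ball_self hr)
    have hclosed : IsClosed ((affineSpan ℝ C : AffineSubspace ℝ (Fin m → ℝ)) : Set (Fin m → ℝ)) :=
      (affineSpan ℝ C).closed_of_finiteDimensional
    have hsub : closure C ⊆ (affineSpan ℝ C : Set (Fin m → ℝ)) :=
      closure_minimal (subset_affineSpan ℝ C) hclosed
    exact top_unique (h1 ▸ affineSpan_le.2 hsub)
  obtain ⟨y, hy⟩ := hC.interior_nonempty_iff_affineSpan_eq_top.2 hspan
  by_cases hyφ : y = φ
  · rwa [hyφ] at hy
  · have hu0 : 0 < ‖φ - y‖ := by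
      rw [norm_pos_iff, sub_ne_zero]
      exact fun h' => hyφ h'.symm
    set t : ℝ := r / ‖φ - y‖ with htdef
    have ht0 : 0 < t := by positivity
    set z : Fin m → ℝ := φ + t • (φ - y) with hz
    have hzball : z ∈ Metric.closedBall φ r := by
      rw [Metric.mem_closedBall, dist_eq_norm, hz, add_sub_cancel_left, norm_smul,
        Real.norm_eq_abs, abs_of_pos ht0, htdef]
      field_simp
      exact le_rfl
    have hzC : z ∈ closure C := h hzball
    have hcombo : (t / (1 + t)) • y + (1 / (1 + t)) • z = φ := by
      rw [hz]
      have h1t : (1:ℝ) + t ≠ 0 := by positivity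
      match_scalars <;> (field_simp; try ring)
    have := hC.combo_interior_closure_mem_interior hy hzC
      (by positivity : (0:ℝ) < t / (1 + t)) (by positivity : (0:ℝ) ≤ 1 / (1 + t))
      (by have h1t : (1:ℝ) + t ≠ 0 := by positivity
          field_simp
          try ring)
    rwa [hcombo] at this

/-- Approximation: any feasible point for `S` can be approximated by feasible points
for `S` intersected with a sublevel set of `‖Γ‖`. -/
lemma approx_DD {n m : ℕ} {f : (Fin n → ℝ) → Fin m → ℝ} {g : (Fin n → ℝ) → ℝ}
    (hf : ∀ i, Measurable fun x => f x i) (hg : Measurable g)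
    {S : Set (Fin n → ℝ)} {ψ : Fin m → ℝ} (hψ : ψ ∈ DD n m f g S) {δ : ℝ} (hδ : 0 < δ) :
    ∀ᶠ R : ℕ in atTop, ∃ q ∈ DD n m f g
      (S ∩ (fun x => (f x, g x)) ⁻¹' Metric.closedBall 0 (R : ℝ)), dist q ψ ≤ δ := by
  obtain ⟨μ, hμp, hμs, hμi, hμe, hμg⟩ := hψ
  haveI := hμp
  have hΓ : Measurable fun x => (f x, g x) :=
    (measurable_pi_lambda _ hf).prodMk hg
  set A : ℕ → Set (Fin n → ℝ) :=
    fun R => (fun x => (f x, g x)) ⁻¹' Metric.closedBall 0 (R : ℝ) with hA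
  have hAm : ∀ R, MeasurableSet (A R) := fun R => hΓ measurableSet_closedBall
  have hAmono : Monotone A := fun i j hij =>
    preimage_mono (Metric.closedBall_subset_closedBall (by exact_mod_cast hij))
  have hAU : ⋃ R, A R = univ := by
    apply eq_univ_of_forall
    intro x
    obtain ⟨R, hR⟩ := exists_nat_ge ‖(f x, g x)‖
    exact mem_iUnion.2 ⟨R, by simpa [hA, mem_closedBall_zero_iff] using hR⟩
  -- choose closed subsets
  have hFex : ∀ R : ℕ, ∃ K, K ⊆ A R ∧ IsClosed K ∧
      μ (A R) < μ K + ENNReal.ofReal (1 / ((R:ℝ) + 1) ^ 2) := by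
    intro R
    exact (hAm R).exists_isClosed_lt_add (measure_ne_top μ _)
      (ENNReal.ofReal_pos.2 (by positivity)).ne'
  choose F hF1 hF2 hF3 using hFex
  have hμdiff : ∀ R : ℕ, (μ (A R \ F R)).toReal ≤ 1 / ((R:ℝ) + 1) ^ 2 := by
    intro R
    have h1 : μ (A R \ F R) = μ (A R) - μ (F R) :=
      measure_diff (hF1 R) (hF2 R).measurableSet.nullMeasurableSet (measure_ne_top μ _)
    have h2 : μ (A R \ F R) ≤ ENNReal.ofReal (1 / ((R:ℝ) + 1) ^ 2) := by
      rw [h1]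
      exact tsub_le_iff_left.2 (hF3 R).le
    exact ENNReal.toReal_le_of_le_ofReal (by positivity) h2
  -- convergence of restricted integrals
  have hInt : ∀ h : (Fin n → ℝ) → ℝ, Integrable h μ →
      (∀ R : ℕ, ∀ x ∈ A R, ‖h x‖ ≤ (R:ℝ) + 1) →
      Tendsto (fun R : ℕ => ∫ x in F R, h x ∂μ) atTop (𝓝 (∫ x, h x ∂μ)) := by
    intro h hint hbd
    have t1 : Tendsto (fun R : ℕ => ∫ x in A R, h x ∂μ) atTop (𝓝 (∫ x, h x ∂μ)) := by
      have := tendsto_setIntegral_of_monotone hAm hAmono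
        (by rw [hAU]; exact hint.integrableOn)
      rwa [hAU, Measure.restrict_univ] at this
    have t2 : Tendsto (fun R : ℕ => ∫ x in A R \ F R, h x ∂μ) atTop (𝓝 0) := by
      refine squeeze_zero_norm (fun R => ?_) tendsto_one_div_add_atTop_nhds_zero_nat
      ·
        have hb1 : ‖∫ x in A R \ F R, h x ∂μ‖ ≤ ((R:ℝ) + 1) * (μ (A R \ F R)).toReal := by
          apply norm_setIntegral_le_of_norm_le_const_ae (measure_lt_top _ _)
          exact ae_restrict_of_forall_mem ((hAm R).diff (hF2 R).measurableSet)
            (fun x hx => hbd R x hx.1)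
        have hb2 : ((R:ℝ) + 1) * (μ (A R \ F R)).toReal ≤ ((R:ℝ) + 1) * (1 / ((R:ℝ) + 1) ^ 2) :=
          mul_le_mul_of_nonneg_left (hμdiff R) (by positivity)
        have hb3 : ((R:ℝ) + 1) * (1 / ((R:ℝ) + 1) ^ 2) = 1 / ((R:ℝ) + 1) := by
          have : ((R:ℝ) + 1) ≠ 0 := by positivity
          field_simp
        linarith
    have heq : ∀ R : ℕ, ∫ x in F R, h x ∂μ =
        (∫ x in A R, h x ∂μ) - ∫ x in A R \ F R, h x ∂μ := by
      intro R
      have := integral_diff (hF2 R).measurableSet hint.integrableOn (hF1 R)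
      linarith [this]
    simp only [heq]
    simpa using t1.sub t2
  set c : ℕ → ℝ := fun R => (μ (F R)).toReal with hc
  have hctend : Tendsto c atTop (𝓝 1) := by
    have := hInt (fun _ => (1:ℝ)) (integrable_const 1)
      (fun R x _ => by
        simp only [norm_one]
        have : (0:ℝ) ≤ (R:ℝ) := Nat.cast_nonneg R
        linarith)
    simp only [integral_const, measureReal_def, measure_univ, ENNReal.toReal_one, one_smul, smul_eq_mul,
      mul_one, Measure.restrict_apply_univ] at this
    exact this
  have hqtend : ∀ i, Tendsto (fun R : ℕ => (c R)⁻¹ * ∫ x in F R, f x i ∂μ)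
      atTop (𝓝 (ψ i)) := by
    intro i
    have hbdi : ∀ R : ℕ, ∀ x ∈ A R, ‖f x i‖ ≤ (R:ℝ) + 1 := by
      intro R x hx
      have h1 : ‖f x i‖ ≤ ‖f x‖ := norm_le_pi_norm (f x) i
      have h2 : ‖f x‖ ≤ ‖(f x, g x)‖ := norm_fst_le (f x, g x)
      have h3 : ‖(f x, g x)‖ ≤ (R:ℝ) := by
        simpa [hA, mem_closedBall_zero_iff] using hx
      linarith
    have := (hctend.inv₀ one_ne_zero).mul (hInt (fun x => f x i) (hμi i) hbdi)
    rw [inv_one, one_mul, hμe i] at this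
    exact this
  have E0 : ∀ᶠ R : ℕ in atTop, 0 < c R :=
    hctend.eventually_mem (Ioi_mem_nhds one_pos)
  have E1 : ∀ᶠ R : ℕ in atTop, ∀ i,
      dist ((c R)⁻¹ * ∫ x in F R, f x i ∂μ) (ψ i) ≤ δ := by
    rw [eventually_all]
    intro i
    exact (hqtend i).eventually_mem (Metric.closedBall_mem_nhds (ψ i) hδ)
  filter_upwards [E0, E1] with R hc0 hE1
  have hμF0 : μ (F R) ≠ 0 := by
    intro h0
    have hz : c R = 0 := by simp [hc, h0]
    rw [hz] at hc0
    exact lt_irrefl 0 hc0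
  have hμFt : μ (F R) ≠ ⊤ := measure_ne_top μ _
  set ν : Measure (Fin n → ℝ) := (μ (F R))⁻¹ • μ.restrict (F R) with hν
  have hνint : ∀ h : (Fin n → ℝ) → ℝ, Integrable h μ → Integrable h ν := by
    intro h hint
    exact (hint.restrict (s := F R)).smul_measure (ENNReal.inv_ne_top.2 hμF0)
  have hνeval : ∀ h : (Fin n → ℝ) → ℝ, ∫ x, h x ∂ν = (c R)⁻¹ * ∫ x in F R, h x ∂μ := by
    intro h
    rw [hν, integral_smul_measure, ENNReal.toReal_inv, smul_eq_mul, hc]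
  refine ⟨fun i => (c R)⁻¹ * ∫ x in F R, f x i ∂μ, ⟨ν, ⟨?_⟩, ?_, ?_, ?_, ?_⟩, ?_⟩
  · rw [hν, Measure.smul_apply, Measure.restrict_apply_univ, smul_eq_mul,
      ENNReal.inv_mul_cancel hμF0 hμFt]
  · -- support
    intro x hx
    have hxF : x ∈ F R := by
      by_contra hxF
      refine hx (F R)ᶜ (hF2 R).isOpen_compl hxF ?_
      rw [hν, Measure.smul_apply, Measure.restrict_apply (hF2 R).measurableSet.compl]
      simp
    have hxμ : x ∈ msupport μ := by
      intro U hU hxU h0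
      refine hx U hU hxU ?_
      rw [hν, Measure.smul_apply, Measure.restrict_apply hU.measurableSet,
        measure_mono_null inter_subset_left h0]
      simp
    exact ⟨hμs hxμ, hF1 R hxF⟩
  · exact fun i => hνint _ (hμi i)
  · exact fun i => hνeval _
  · exact hνint _ hμg
  · rw [dist_pi_le_iff hδ.le]
    intro i
    exact hE1 i

lemma crux {n m : ℕ} {f : (Fin n → ℝ) → Fin m → ℝ} {g : (Fin n → ℝ) → ℝ}
    (hf : ∀ i, Measurable fun x => f x i) (hg : Measurable g)
    {S : Set (Fin n → ℝ)} {φ : Fin m → ℝ}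
    (hint : φ ∈ interior (DD n m f g S)) :
    ∃ R₀ : ℕ, φ ∈ interior (DD n m f g
      (S ∩ (fun x => (f x, g x)) ⁻¹' Metric.closedBall 0 (R₀ : ℝ))) := by
  obtain ⟨ε, hε0, hball⟩ : ∃ ε > 0, Metric.closedBall φ ε ⊆ DD n m f g S := by
    rcases Metric.mem_nhds_iff.1 (mem_interior_iff_mem_nhds.1 hint) with ⟨ε, hε, h⟩
    exact ⟨ε / 2, by positivity,
      (Metric.closedBall_subset_ball (by linarith)).trans h⟩
  have hδ0 : (0:ℝ) < ε / 8 := by positivity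
  obtain ⟨t, hts, htf, htcov⟩ :=
    (isCompact_closedBall φ ε).finite_cover_balls (e := ε / 8) hδ0
  have hev : ∀ᶠ R : ℕ in atTop, ∀ ψ ∈ t, ∃ q ∈ DD n m f g
      (S ∩ (fun x => (f x, g x)) ⁻¹' Metric.closedBall 0 (R : ℝ)), dist q ψ ≤ ε / 8 :=
    (eventually_all_finite htf).2 fun ψ hψ =>
      approx_DD hf hg (hball (hts hψ)) hδ0
  obtain ⟨R₀, hR₀⟩ := hev.exists
  set C := DD n m f g (S ∩ (fun x => (f x, g x)) ⁻¹' Metric.closedBall 0 (R₀ : ℝ)) with hCdef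
  refine ⟨R₀, mem_interior_of_closedBall_subset_closure (DD_convex f g _)
    (r := ε / 2) (by positivity) ?_⟩
  intro x hx
  refine mem_closure_of_net (DD_convex f g _) (δ := ε / 4) (by positivity)
    (by linarith) ?_ (Metric.mem_closedBall.1 hx)
  intro ρ hρ
  obtain ⟨ψ, hψt, hρψ⟩ : ∃ ψ ∈ t, ρ ∈ Metric.ball ψ (ε / 8) := by
    have := htcov (Metric.mem_closedBall.2 hρ)
    simpa using this
  obtain ⟨q, hq, hqψ⟩ := hR₀ ψ hψt
  refine ⟨q, hq, ?_⟩
  calc dist q ρ ≤ dist q ψ + dist ψ ρ := dist_triangle _ _ _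
    _ ≤ ε / 8 + ε / 8 := by
        have := Metric.mem_ball.1 hρψ
        rw [dist_comm ψ ρ]
        linarith
    _ ≤ ε / 4 := by linarith

lemma cover_props {n m : ℕ} (f : (Fin n → ℝ) → Fin m → ℝ) (g : (Fin n → ℝ) → ℝ)
    (S : Set (Fin n → ℝ)) (R₀ : ℕ) :
    ProgCover S (fun k => S ∩ (fun x => (f x, g x)) ⁻¹'
        Metric.closedBall 0 ((R₀ + k : ℕ) : ℝ)) ∧
      ∀ k, Bornology.IsBounded ((fun x => (f x, g x)) ''
        (S ∩ (fun x => (f x, g x)) ⁻¹' Metric.closedBall 0 ((R₀ + k : ℕ) : ℝ))) := by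
  constructor
  · refine ⟨?_, fun k => inter_subset_left, ?_⟩
    · intro i j hij
      apply inter_subset_inter_right
      apply preimage_mono
      apply Metric.closedBall_subset_closedBall
      exact_mod_cast Nat.add_le_add_left hij R₀
    · intro x hx
      obtain ⟨k, hk⟩ := exists_nat_ge ‖(f x, g x)‖
      refine ⟨k, hx, ?_⟩
      simp only [mem_preimage, mem_closedBall_zero_iff]
      calc ‖(f x, g x)‖ ≤ (k : ℝ) := hk
        _ ≤ ((R₀ + k : ℕ) : ℝ) := by exact_mod_cast Nat.le_add_left k R₀
  · intro k
    refine (Metric.isBounded_closedBall (x := (0 : (Fin m → ℝ) × ℝ))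
      (r := ((R₀ + k : ℕ) : ℝ))).subset ?_
    rintro _ ⟨x, hx, rfl⟩
    exact hx.2

/-- existence of a progressive cover with bounded images under
`Γ` preserving the position of `φ` relative to the feasible sets. -/
theorem exists_progressive_cover_bounded {n m : ℕ}
    (f : (Fin n → ℝ) → Fin m → ℝ) (g : (Fin n → ℝ) → ℝ)
    (hf : ∀ i, Measurable fun x => f x i) (hg : Measurable g)
    (S : Set (Fin n → ℝ)) (φ : Fin m → ℝ)
    (hφ : φ ∉ frontier (DD n m f g S)) :
    ∃ T : ℕ → Set (Fin n → ℝ), ProgCover S T ∧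
      (∀ k, Bornology.IsBounded ((fun x => (f x, g x)) '' T k)) ∧
      (φ ∉ closure (DD n m f g S) → ∀ k, φ ∉ closure (DD n m f g (T k))) ∧
      (φ ∈ interior (DD n m f g S) → ∀ k, φ ∈ interior (DD n m f g (T k))) := by
  classical
  by_cases hint : φ ∈ interior (DD n m f g S)
  · obtain ⟨R₀, hR₀⟩ := crux hf hg hint
    obtain ⟨hpc, hbd⟩ := cover_props f g S R₀
    refine ⟨_, hpc, hbd, ?_, ?_⟩
    · intro hcl
      exact absurd (subset_closure (interior_subset hint)) hcl
    · intro _ k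
      have hsub : DD n m f g (S ∩ (fun x => (f x, g x)) ⁻¹' Metric.closedBall 0 ((R₀ : ℕ) : ℝ))
          ⊆ DD n m f g (S ∩ (fun x => (f x, g x)) ⁻¹'
            Metric.closedBall 0 ((R₀ + k : ℕ) : ℝ)) :=
        DD_mono f g (inter_subset_inter_right S (preimage_mono
          (Metric.closedBall_subset_closedBall (by exact_mod_cast Nat.le_add_right R₀ k))))
      exact interior_mono hsub hR₀
  · obtain ⟨hpc, hbd⟩ := cover_props f g S 0
    refine ⟨_, hpc, hbd, ?_, ?_⟩
    · intro hcl k hc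
      exact hcl (closure_mono (DD_mono f g inter_subset_left) hc)
    · intro h
      exact absurd h hint
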